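/- Let G be an r-uniform hypergraph on t vertices with m edges. If m > t^r · C(t−1, r) / (t−1)^r, then G is dense. -/

import Mathlib

structure RUnifHypergraph (r : ℕ) where
  verts : Finset ℕ
  edges : Finset (Finset ℕ)
  edge_sub : ∀ e ∈ edges, e ⊆ verts
  edge_card : ∀ e ∈ edges, e.card = r

namespace RUnifHypergraph

variable {r : ℕ}

/-- The polynomial value `λ(E, x) = Σ_{e ∈ E} Π_{i ∈ e} x_i`. -/
def polyValue (E : Finset (Finset ℕ)) (x : ℕ → ℝ) : ℝ :=
  ∑ e ∈ E, ∏ i ∈ e, x i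

/-- A legal weighting: nonnegative, supported on the vertex set, summing to 1. -/
def LegalWeighting (G : RUnifHypergraph r) (x : ℕ → ℝ) : Prop :=
  (∀ i, 0 ≤ x i) ∧ (∀ i ∉ G.verts, x i = 0) ∧ ∑ i ∈ G.verts, x i = 1

/-- The Lagrangian of a hypergraph. -/
noncomputable def lagrangian (G : RUnifHypergraph r) : ℝ :=
  sSup {l : ℝ | ∃ x, G.LegalWeighting x ∧ l = polyValue G.edges x}

/-- An optimum weighting attains the Lagrangian. -/
def IsOptimal (G : RUnifHypergraph r) (x : ℕ → ℝ) : Prop :=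
  G.LegalWeighting x ∧ polyValue G.edges x = G.lagrangian

def IsSubgraph (H G : RUnifHypergraph r) : Prop :=
  H.verts ⊆ G.verts ∧ H.edges ⊆ G.edges

def IsProperSubgraph (H G : RUnifHypergraph r) : Prop :=
  H.IsSubgraph G ∧ (H.verts ≠ G.verts ∨ H.edges ≠ G.edges)

/-- A hypergraph is dense if every proper subgraph has strictly smaller Lagrangian. -/
def Dense (G : RUnifHypergraph r) : Prop :=
  ∀ H : RUnifHypergraph r, H.IsProperSubgraph G → H.lagrangian < G.lagrangian

/-- The link `E_i` of a vertex `i`. -/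
def link (G : RUnifHypergraph r) (i : ℕ) : Finset (Finset ℕ) :=
  (G.edges.filter fun e => i ∈ e).image fun e => e.erase i

/-- The pair link `E_{ij}`. -/
def pairLink (G : RUnifHypergraph r) (i j : ℕ) : Finset (Finset ℕ) :=
  (G.edges.filter fun e => i ∈ e ∧ j ∈ e).image fun e => (e.erase i).erase j

/-- `E_{i \ j} = E_i ∩ E_j^c`. -/
def linkDiff (G : RUnifHypergraph r) (i j : ℕ) : Finset (Finset ℕ) :=
  (G.link i).filter fun A => j ∉ A ∧ insert j A ∉ G.edges

/-- `G` contains a clique of order `t`. -/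
def HasClique (G : RUnifHypergraph r) (t : ℕ) : Prop :=
  ∃ S ⊆ G.verts, S.card = t ∧ S.powersetCard r ⊆ G.edges

/-- `G` is left-compressed: replacing a vertex of an edge by a smaller vertex
not in the edge yields an edge. -/
def LeftCompressed (G : RUnifHypergraph r) : Prop :=
  ∀ e ∈ G.edges, ∀ i j : ℕ, i ∈ G.verts → i < j → j ∈ e → i ∉ e →
    insert i (e.erase j) ∈ G.edges

/-- The subgraph induced on a vertex set `S`. -/
def induce (G : RUnifHypergraph r) (S : Finset ℕ) : RUnifHypergraph r :=
  ⟨G.verts ∩ S, G.edges.filter fun e => e ⊆ S,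
   fun e he => Finset.subset_inter (G.edge_sub e (Finset.mem_filter.mp he).1)
     (Finset.mem_filter.mp he).2,
   fun e he => G.edge_card e (Finset.mem_filter.mp he).1⟩

end RUnifHypergraph

/-- The complete `r`-graph on vertex set `{1, …, t}`. -/
def completeHG (t r : ℕ) : RUnifHypergraph r :=
  ⟨Finset.Icc 1 t, (Finset.Icc 1 t).powersetCard r,
   fun _ he => (Finset.mem_powersetCard.mp he).1,
   fun _ he => (Finset.mem_powersetCard.mp he).2⟩

/-- `H₁ = [t-1]^{(3)} \ {(t-3)(t-2)(t-1)}`. -/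
def H1 (t : ℕ) : RUnifHypergraph 3 :=
  ⟨Finset.Icc 1 (t-1), (completeHG (t-1) 3).edges.erase {t-3, t-2, t-1},
   fun e he => (completeHG (t-1) 3).edge_sub e (Finset.mem_of_mem_erase he),
   fun e he => (completeHG (t-1) 3).edge_card e (Finset.mem_of_mem_erase he)⟩


private lemma amgm2 (k : ℕ) {a b : ℝ} (ha : 0 ≤ a) (hb : 0 ≤ b) :
    a ^ k * b ≤ (((k : ℝ) * a + b) / ((k : ℝ) + 1)) ^ (k + 1) := by
  rcases ha.eq_or_lt with h0 | hapos
  · cases k with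
    | zero => simp
    | succ n => rw [← h0]; simp [zero_pow]; positivity
  rcases hb.eq_or_lt with h0 | hbpos
  · rw [← h0]; simpa using by positivity
  have hk1 : (0:ℝ) < (k:ℝ) + 1 := by positivity
  have w1 : (0:ℝ) ≤ (k:ℝ)/((k:ℝ)+1) := by positivity
  have w2 : (0:ℝ) ≤ 1/((k:ℝ)+1) := by positivity
  have hw : (k:ℝ)/((k:ℝ)+1) + 1/((k:ℝ)+1) = 1 := by field_simp
  have key := Real.geom_mean_le_arith_mean2_weighted w1 w2 ha hb hw
  have hLnn : (0:ℝ) ≤ a ^ ((k:ℝ)/((k:ℝ)+1)) * b ^ (1/((k:ℝ)+1)) := by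
    apply mul_nonneg <;> exact Real.rpow_nonneg (by assumption) _
  have hpow := pow_le_pow_left₀ hLnn key (k + 1)
  have hL : (a ^ ((k:ℝ)/((k:ℝ)+1)) * b ^ (1/((k:ℝ)+1))) ^ (k+1) = a ^ k * b := by
    rw [mul_pow, ← Real.rpow_natCast (a ^ ((k:ℝ)/((k:ℝ)+1))) (k+1),
      ← Real.rpow_natCast (b ^ (1/((k:ℝ)+1))) (k+1),
      ← Real.rpow_mul ha, ← Real.rpow_mul hb]
    push_cast
    rw [div_mul_cancel₀ _ (ne_of_gt hk1), one_div, inv_mul_cancel₀ (ne_of_gt hk1),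
      Real.rpow_natCast, Real.rpow_one]
  have hR : (k:ℝ)/((k:ℝ)+1) * a + 1/((k:ℝ)+1) * b = ((k:ℝ) * a + b) / ((k:ℝ)+1) := by
    field_simp
  rw [hL, hR] at hpow
  exact hpow

private lemma singlevar (k s : ℕ) {σ t : ℝ} (hσ : 0 ≤ σ) (ht : 0 ≤ t) (hs : 1 ≤ s) :
    t ^ k * (σ - (k:ℝ) * (s:ℝ) * t / ((k:ℝ)+1)) ≤ σ ^ (k+1) / (((k:ℝ)+1) * (s:ℝ)^k) := by
  have hspos : (0:ℝ) < (s:ℝ) := by exact_mod_cast hs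
  have hk1 : (0:ℝ) < (k:ℝ) + 1 := by positivity
  set b := σ - (k:ℝ)*(s:ℝ)*t/((k:ℝ)+1) with hbdef
  rcases le_or_gt b 0 with hb | hb
  · have h1 : t ^ k * b ≤ 0 := mul_nonpos_of_nonneg_of_nonpos (pow_nonneg ht k) hb
    have h2 : (0:ℝ) ≤ σ^(k+1) / (((k:ℝ)+1)*(s:ℝ)^k) := by positivity
    exact h1.trans h2
  · set a := (s:ℝ) * t / ((k:ℝ)+1) with hadef
    have ha : 0 ≤ a := by positivity
    have key := amgm2 k ha hb.le
    have hsum : (k:ℝ) * a + b = σ := by rw [hadef, hbdef]; field_simp; ring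
    rw [hsum] at key
    have h2 : t ^ k = a ^ k * (((k:ℝ)+1)/(s:ℝ)) ^ k := by
      rw [← mul_pow]; congr 1; rw [hadef]; field_simp
    have h3 : (0:ℝ) ≤ (((k:ℝ)+1)/(s:ℝ)) ^ k := by positivity
    calc t ^ k * b = a ^ k * b * (((k:ℝ)+1)/(s:ℝ)) ^ k := by rw [h2]; ring
      _ ≤ (σ/((k:ℝ)+1))^(k+1) * (((k:ℝ)+1)/(s:ℝ)) ^ k := by
          exact mul_le_mul_of_nonneg_right key h3
      _ = σ ^ (k+1) / (((k:ℝ)+1) * (s:ℝ)^k) := by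
          rw [div_pow, div_pow]; field_simp; ring

private lemma maclaurin (y : ℕ → ℝ) (hy : ∀ i, 0 ≤ y i) (S : Finset ℕ) :
    ∀ r : ℕ, ∑ e ∈ S.powersetCard r, ∏ i ∈ e, y i
      ≤ (S.card.choose r : ℝ) * ((∑ i ∈ S, y i) / (S.card : ℝ)) ^ r := by
  induction S using Finset.induction_on with
  | empty =>
    intro r
    cases r with
    | zero => simp
    | succ n =>
      rw [Finset.powersetCard_eq_empty.mpr (by simp)]
      simp
  | insert v S' hvS' ih =>
    intro r
    cases r with
    | zero => simp
    | succ k =>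
      rw [Finset.powersetCard_succ_insert hvS']
      have hdisj : Disjoint (S'.powersetCard (k+1))
          ((S'.powersetCard k).image (insert v)) := by
        rw [Finset.disjoint_right]
        intro e hei hep
        obtain ⟨e', he', rfl⟩ := Finset.mem_image.mp hei
        have := (Finset.mem_powersetCard.mp hep).1
        exact hvS' (this (Finset.mem_insert_self v e'))
      rw [Finset.sum_union hdisj]
      have himg : ∑ e ∈ (S'.powersetCard k).image (insert v), ∏ i ∈ e, y i
          = y v * ∑ e ∈ S'.powersetCard k, ∏ i ∈ e, y i := by
        rw [Finset.sum_image, Finset.mul_sum]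
        · apply Finset.sum_congr rfl
          intro e hee
          have hve : v ∉ e := fun hmem =>
            hvS' ((Finset.mem_powersetCard.mp hee).1 hmem)
          rw [Finset.prod_insert hve]
        · intro e1 h1 e2 h2 heq
          have hv1 : v ∉ e1 := fun hmem => hvS' ((Finset.mem_powersetCard.mp h1).1 hmem)
          have hv2 : v ∉ e2 := fun hmem => hvS' ((Finset.mem_powersetCard.mp h2).1 hmem)
          rw [← Finset.erase_insert hv1, ← Finset.erase_insert hv2, heq]
      rw [himg, Finset.sum_insert hvS', Finset.card_insert_of_notMem hvS']
      set n := S'.card with hn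
      set A := ∑ i ∈ S', y i with hA
      clear_value n A
      have hAnn : 0 ≤ A := hA ▸ Finset.sum_nonneg fun i _ => hy i
      have hyv : 0 ≤ y v := hy v
      rcases Nat.lt_or_ge n k with hnk | hkn
      · -- n < k : all empty/zero
        rw [Finset.powersetCard_eq_empty.mpr (by omega),
          Finset.powersetCard_eq_empty.mpr (by omega),
          Nat.choose_eq_zero_of_lt (by omega)]
        simp
      · -- k ≤ n
        rcases Nat.eq_zero_or_pos n with h0 | hnpos
        · -- n = 0, hence k = 0 and S' = ∅
          subst h0
          have hk0 : k = 0 := by omega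
          subst hk0
          have hS' : S' = ∅ := Finset.card_eq_zero.mp hn.symm
          subst hS'
          have hA0 : A = 0 := by simpa using hA
          subst hA0
          rw [Finset.powersetCard_eq_empty.mpr (by simp)]
          simp
        · -- main case : 1 ≤ n, k ≤ n
          have hnpos' : (0:ℝ) < (n:ℝ) := by exact_mod_cast hnpos
          have ih1 := ih (k+1)
          have ih2 := ih k
          set t : ℝ := A / (n:ℝ) with htdef
          set σ : ℝ := A + y v with hσdef
          have ht : 0 ≤ t := by rw [htdef]; positivity
          have hσpos : 0 ≤ σ := by rw [hσdef]; positivity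
          have hnt : (n:ℝ) * t = A := by rw [htdef]; field_simp
          have hsum2 : y v * ∑ e ∈ S'.powersetCard k, ∏ i ∈ e, y i
              ≤ y v * ((n.choose k : ℝ) * t ^ k) :=
            mul_le_mul_of_nonneg_left ih2 hyv
          have key := singlevar k (n+1) (σ := σ) (t := t) hσpos ht (by omega)
          push_cast at key
          have id1 : ((n.choose (k+1) : ℝ)) * ((k:ℝ)+1)
              = (n.choose k : ℝ) * ((n:ℝ) - (k:ℝ)) := by
            have h := congrArg (Nat.cast (R := ℝ)) (Nat.choose_succ_right_eq n k)
            push_cast [Nat.cast_sub hkn] at h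
            linarith [h]
          have id2 : ((n:ℝ)+1) * (n.choose k : ℝ)
              = ((n+1).choose (k+1) : ℝ) * ((k:ℝ)+1) := by
            have h := congrArg (Nat.cast (R := ℝ)) (Nat.add_one_mul_choose_eq n k)
            push_cast at h
            linarith [h]
          have hyveq : y v = σ - (n:ℝ) * t := by rw [hσdef, hnt]; ring
          have hEq : (n.choose (k+1) : ℝ) * t ^ (k+1) + y v * ((n.choose k : ℝ) * t ^ k)
              = (n.choose k : ℝ) * (t ^ k * (σ - (k:ℝ) * ((n:ℝ)+1) * t / ((k:ℝ)+1))) := by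
            rw [hyveq]
            have hk1 : ((k:ℝ)+1) ≠ 0 := by positivity
            field_simp
            linear_combination (t^(k+1)) * id1
          have hc2nn : (0:ℝ) ≤ (n.choose k : ℝ) := by positivity
          have hREq : ((n+1).choose (k+1) : ℝ) * ((y v + A) / ((n:ℝ)+1)) ^ (k+1)
              = (n.choose k : ℝ) * (σ ^ (k+1) / (((k:ℝ)+1) * ((n:ℝ)+1)^k)) := by
            have hσ2 : y v + A = σ := by rw [hσdef]; ring
            have hd1 : ((n:ℝ)+1)^(k+1) ≠ 0 := by positivity
            have hd2 : (((k:ℝ)+1) * ((n:ℝ)+1)^k) ≠ 0 := by positivity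
            have hsc : ((n+1).choose (k+1) : ℝ) * (((k:ℝ)+1) * ((n:ℝ)+1)^k)
                = (n.choose k : ℝ) * ((n:ℝ)+1)^(k+1) := by
              rw [pow_succ]
              linear_combination (-((n:ℝ)+1)^k) * id2
            rw [hσ2, div_pow, ← mul_div_assoc, ← mul_div_assoc,
              div_eq_div_iff hd1 hd2]
            linear_combination σ^(k+1) * hsc
          push_cast
          calc ∑ e ∈ S'.powersetCard (k+1), ∏ i ∈ e, y i
                + y v * ∑ e ∈ S'.powersetCard k, ∏ i ∈ e, y i
              ≤ (n.choose (k+1) : ℝ) * t ^ (k+1) + y v * ((n.choose k : ℝ) * t ^ k) :=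
                add_le_add ih1 hsum2
            _ = (n.choose k : ℝ) * (t ^ k * (σ - (k:ℝ) * ((n:ℝ)+1) * t / ((k:ℝ)+1))) := hEq
            _ ≤ (n.choose k : ℝ) * (σ ^ (k+1) / (((k:ℝ)+1) * ((n:ℝ)+1)^k)) :=
                mul_le_mul_of_nonneg_left key hc2nn
            _ = ((n+1).choose (k+1) : ℝ) * ((y v + A) / ((n:ℝ)+1)) ^ (k+1) := hREq.symm

private lemma legal_le_one {r : ℕ} (G : RUnifHypergraph r) {y : ℕ → ℝ}
    (hy : G.LegalWeighting y) {i : ℕ} (hi : i ∈ G.verts) : y i ≤ 1 := by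
  obtain ⟨h0, hsupp, hsum⟩ := hy
  calc y i ≤ ∑ j ∈ G.verts, y j := Finset.single_le_sum (fun j _ => h0 j) hi
    _ = 1 := hsum

private lemma polyValue_le_card {r : ℕ} (G : RUnifHypergraph r) {y : ℕ → ℝ}
    (hy : G.LegalWeighting y) : RUnifHypergraph.polyValue G.edges y ≤ G.edges.card := by
  rw [RUnifHypergraph.polyValue]
  calc ∑ e ∈ G.edges, ∏ i ∈ e, y i ≤ ∑ e ∈ G.edges, 1 := by
        apply Finset.sum_le_sum
        intro e hee
        apply Finset.prod_le_one (fun i _ => hy.1 i)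
        intro i hi
        exact legal_le_one G hy (G.edge_sub e hee hi)
    _ = G.edges.card := by simp

private lemma lag_bddAbove {r : ℕ} (G : RUnifHypergraph r) :
    BddAbove {l : ℝ | ∃ x, G.LegalWeighting x ∧ l = RUnifHypergraph.polyValue G.edges x} := by
  refine ⟨G.edges.card, ?_⟩
  rintro l ⟨x, hx, rfl⟩
  exact polyValue_le_card G hx

private lemma le_lag {r : ℕ} (G : RUnifHypergraph r) {y : ℕ → ℝ} (hy : G.LegalWeighting y) :
    RUnifHypergraph.polyValue G.edges y ≤ G.lagrangian :=
  le_csSup (lag_bddAbove G) ⟨y, hy, rfl⟩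

private lemma lag_le {r : ℕ} (G : RUnifHypergraph r) {B : ℝ} (hB : 0 ≤ B)
    (h : ∀ y, G.LegalWeighting y → RUnifHypergraph.polyValue G.edges y ≤ B) :
    G.lagrangian ≤ B :=
  Real.sSup_le (by rintro l ⟨y, hy, rfl⟩; exact h y hy) hB

private lemma polyValue_supp_le {r : ℕ} (E : Finset (Finset ℕ)) (S : Finset ℕ)
    (hE : ∀ e ∈ E, e.card = r) (y : ℕ → ℝ) (hy : ∀ i, 0 ≤ y i)
    (hsupp : ∀ i ∉ S, y i = 0) :
    RUnifHypergraph.polyValue E y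
      ≤ (S.card.choose r : ℝ) * ((∑ i ∈ S, y i) / (S.card : ℝ)) ^ r := by
  refine le_trans ?_ (maclaurin y hy S r)
  rw [RUnifHypergraph.polyValue]
  have hcond : ∀ e ∈ E, (∏ i ∈ e, y i) ≠ 0 → e ⊆ S := by
    intro e he hne i hi
    by_contra hiS
    exact hne (Finset.prod_eq_zero hi (hsupp i hiS))
  rw [← Finset.sum_filter_of_ne hcond]
  apply Finset.sum_le_sum_of_subset_of_nonneg
  · intro e hee
    obtain ⟨h1, h2⟩ := Finset.mem_filter.mp hee
    exact Finset.mem_powersetCard.mpr ⟨h2, hE e h1⟩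
  · intro e _ _
    exact Finset.prod_nonneg fun i _ => hy i

/-- If `G` has `t` vertices and `m > t^r · C(t-1,r) / (t-1)^r` edges,
then `G` is dense. -/
theorem dense_of_many_edges {r t m : ℕ} (G : RUnifHypergraph r)
    (hv : G.verts.card = t) (he : G.edges.card = m)
    (h : (t : ℝ) ^ r * ((t - 1).choose r : ℝ) / ((t : ℝ) - 1) ^ r < (m : ℝ)) :
    G.Dense := by
  rcases Nat.eq_zero_or_pos r with hr0 | hrpos
  · subst hr0
    exfalso
    have hm1 : m ≤ 1 := by
      rw [← he]
      have hsub : G.edges ⊆ {∅} := by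
        intro e hee
        simp [Finset.card_eq_zero.mp (G.edge_card e hee)]
      calc G.edges.card ≤ ({∅} : Finset (Finset ℕ)).card := Finset.card_le_card hsub
        _ = 1 := rfl
    simp only [pow_zero, Nat.choose_zero_right, Nat.cast_one, mul_one, one_mul,
      div_one] at h
    have : (m:ℝ) ≤ 1 := by exact_mod_cast hm1
    linarith
  rcases Nat.eq_zero_or_pos t with ht0 | htpos
  · subst ht0
    exfalso
    have hverts : G.verts = ∅ := Finset.card_eq_zero.mp hv
    have hedges : G.edges = ∅ := by
      rw [Finset.eq_empty_iff_forall_notMem]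
      intro e hee
      have h1 : e ⊆ ∅ := hverts ▸ G.edge_sub e hee
      have h2 : e.card = r := G.edge_card e hee
      rw [Finset.subset_empty.mp h1] at h2
      simp at h2
      omega
    have hm0 : m = 0 := by rw [← he, hedges]; rfl
    subst hm0
    simp [zero_pow (show r ≠ 0 by omega)] at h
  -- main part
  have htR : (0:ℝ) < t := by exact_mod_cast htpos
  set B : ℝ := ((t-1).choose r : ℝ) / ((t:ℝ) - 1) ^ r with hBdef
  have ht1R : (0:ℝ) ≤ (t:ℝ) - 1 := by
    have : (1:ℝ) ≤ t := by exact_mod_cast htpos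
    linarith
  have hBnn : 0 ≤ B := by
    rw [hBdef]
    exact div_nonneg (by positivity) (pow_nonneg ht1R r)
  have hBlt : B < (m:ℝ) / (t:ℝ)^r := by
    rw [lt_div_iff₀ (pow_pos htR r)]
    calc B * (t:ℝ)^r = (t:ℝ)^r * ((t-1).choose r : ℝ) / ((t:ℝ)-1)^r := by
          rw [hBdef]; ring
      _ < m := h
  have hmt : (m:ℝ)/(t:ℝ)^r ≤ G.lagrangian := by
    set u : ℕ → ℝ := fun i => if i ∈ G.verts then 1/(t:ℝ) else 0 with hu
    have hleg : G.LegalWeighting u := by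
      refine ⟨fun i => ?_, fun i hi => ?_, ?_⟩
      · rw [hu]; dsimp only; split <;> positivity
      · rw [hu]; dsimp only; rw [if_neg hi]
      · have h1 : ∑ i ∈ G.verts, u i = ∑ i ∈ G.verts, 1/(t:ℝ) := by
          refine Finset.sum_congr rfl fun i hi => ?_
          rw [hu]; dsimp only; rw [if_pos hi]
        rw [h1, Finset.sum_const, hv, nsmul_eq_mul]
        field_simp
    have hval : RUnifHypergraph.polyValue G.edges u = (m:ℝ)/(t:ℝ)^r := by
      rw [RUnifHypergraph.polyValue]
      have h2 : ∀ e ∈ G.edges, ∏ i ∈ e, u i = (1/(t:ℝ))^r := by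
        intro e hee
        have h3 : ∏ i ∈ e, u i = ∏ i ∈ e, 1/(t:ℝ) := by
          refine Finset.prod_congr rfl fun i hi => ?_
          rw [hu]; dsimp only; rw [if_pos (G.edge_sub e hee hi)]
        rw [h3, Finset.prod_const, G.edge_card e hee]
      rw [Finset.sum_congr rfl h2, Finset.sum_const, he, nsmul_eq_mul, div_pow,
        one_pow]
      ring
    rw [← hval]
    exact le_lag G hleg
  intro H hH
  obtain ⟨⟨hVsub, hEsub⟩, hne⟩ := hH
  by_cases hveq : H.verts = G.verts
  · -- same vertex set, missing an edge
    have hEne : H.edges ≠ G.edges := hne.resolve_left (not_not.mpr hveq)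
    have hEss : H.edges ⊂ G.edges := Finset.ssubset_iff_subset_ne.mpr ⟨hEsub, hEne⟩
    obtain ⟨e₀, he₀G, he₀H⟩ := Finset.exists_of_ssubset hEss
    have he₀card : e₀.card = r := G.edge_card e₀ he₀G
    have he₀ne : e₀.Nonempty := Finset.card_pos.mp (by omega)
    have he₀sub : e₀ ⊆ G.verts := G.edge_sub e₀ he₀G
    set ε : ℝ := G.lagrangian - B with hε
    have hεpos : 0 < ε := by
      rw [hε]
      have := lt_of_lt_of_le hBlt hmt
      linarith
    set δ₀ : ℝ := ε / (2*((m:ℝ)+1)) with hδ₀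
    have hδ₀pos : 0 < δ₀ := by rw [hδ₀]; positivity
    set c : ℝ := min (ε/2) (δ₀^r) with hc
    have hcpos : 0 < c := lt_min (by positivity) (by positivity)
    have hcle : c ≤ ε/2 := min_le_left _ _
    have hbound : ∀ y, H.LegalWeighting y →
        RUnifHypergraph.polyValue H.edges y ≤ G.lagrangian - c := by
      intro y hy
      have hyG : G.LegalWeighting y := by
        rw [RUnifHypergraph.LegalWeighting, ← hveq]
        exact hy
      obtain ⟨v, hvmem, hvmin⟩ := Finset.exists_min_image e₀ y he₀ne
      set δ := y v with hδ
      have hδnn : 0 ≤ δ := hy.1 v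
      -- Bound 1 : polyValue ≤ lagrangian - δ^r
      have hprod : δ^r ≤ ∏ i ∈ e₀, y i := by
        rw [← he₀card, ← Finset.prod_const]
        exact Finset.prod_le_prod (fun i _ => hδnn) (fun i hi => hvmin i hi)
      have hb1 : RUnifHypergraph.polyValue H.edges y ≤ G.lagrangian - δ^r := by
        have h1 : RUnifHypergraph.polyValue H.edges y + δ^r
            ≤ RUnifHypergraph.polyValue G.edges y := by
          rw [RUnifHypergraph.polyValue, RUnifHypergraph.polyValue]
          calc ∑ e ∈ H.edges, ∏ i ∈ e, y i + δ^r
              ≤ ∑ e ∈ H.edges, ∏ i ∈ e, y i + ∏ i ∈ e₀, y i := by linarith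
            _ = ∑ e ∈ insert e₀ H.edges, ∏ i ∈ e, y i := by
                rw [Finset.sum_insert he₀H]; ring
            _ ≤ ∑ e ∈ G.edges, ∏ i ∈ e, y i :=
                Finset.sum_le_sum_of_subset_of_nonneg
                  (Finset.insert_subset he₀G hEsub)
                  (fun e _ _ => Finset.prod_nonneg fun i _ => hy.1 i)
        have h2 := le_lag G hyG
        linarith
      -- Bound 2 : polyValue ≤ B + m * δ
      set y' : ℕ → ℝ := fun i => if i = v then 0 else y i with hy'
      have hy'nn : ∀ i, 0 ≤ y' i := by
        intro i
        rw [hy']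
        dsimp only
        split
        · exact le_rfl
        · exact hy.1 i
      have hstep : ∀ e ∈ H.edges, ∏ i ∈ e, y i ≤ ∏ i ∈ e, y' i + δ := by
        intro e hee
        by_cases hve : v ∈ e
        · have hle1 : ∏ i ∈ e, y i ≤ δ := by
            rw [← Finset.prod_erase_mul e y hve]
            have h1 : ∏ i ∈ e.erase v, y i ≤ 1 :=
              Finset.prod_le_one (fun i _ => hy.1 i)
                (fun i hi => legal_le_one H hy
                  (H.edge_sub e hee (Finset.mem_of_mem_erase hi)))
            have h2 : (0:ℝ) ≤ ∏ i ∈ e.erase v, y i :=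
              Finset.prod_nonneg fun i _ => hy.1 i
            nlinarith
          have h2 : 0 ≤ ∏ i ∈ e, y' i := Finset.prod_nonneg fun i _ => hy'nn i
          linarith
        · have heq : ∏ i ∈ e, y i = ∏ i ∈ e, y' i := by
            refine Finset.prod_congr rfl fun i hi => ?_
            rw [hy']
            dsimp only
            rw [if_neg (show i ≠ v from fun hiv => hve (hiv ▸ hi))]
          linarith [heq.le]
      have hcardle : (H.edges.card : ℝ) ≤ (m:ℝ) := by
        exact_mod_cast he ▸ Finset.card_le_card hEsub
      have hb2a : RUnifHypergraph.polyValue H.edges y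
          ≤ RUnifHypergraph.polyValue H.edges y' + (m:ℝ) * δ := by
        rw [RUnifHypergraph.polyValue, RUnifHypergraph.polyValue]
        calc ∑ e ∈ H.edges, ∏ i ∈ e, y i
            ≤ ∑ e ∈ H.edges, (∏ i ∈ e, y' i + δ) := Finset.sum_le_sum hstep
          _ = ∑ e ∈ H.edges, ∏ i ∈ e, y' i + (H.edges.card : ℝ) * δ := by
              rw [Finset.sum_add_distrib, Finset.sum_const, nsmul_eq_mul]
          _ ≤ ∑ e ∈ H.edges, ∏ i ∈ e, y' i + (m:ℝ) * δ := by nlinarith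
      have hvG : v ∈ G.verts := he₀sub hvmem
      have hy'supp : ∀ i ∉ G.verts.erase v, y' i = 0 := by
        intro i hi
        rw [Finset.mem_erase] at hi
        push_neg at hi
        rw [hy']
        dsimp only
        by_cases hiv : i = v
        · rw [if_pos hiv]
        · rw [if_neg hiv]
          exact hyG.2.1 i (hi hiv)
      have hb2b : RUnifHypergraph.polyValue H.edges y' ≤ B := by
        have h1 := polyValue_supp_le H.edges (G.verts.erase v) H.edge_card y'
          hy'nn hy'supp
        have hcard' : (G.verts.erase v).card = t - 1 := by
          rw [Finset.card_erase_of_mem hvG, hv]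
        rw [hcard'] at h1
        have hsnn : 0 ≤ ∑ i ∈ G.verts.erase v, y' i :=
          Finset.sum_nonneg fun i _ => hy'nn i
        have hsle : ∑ i ∈ G.verts.erase v, y' i ≤ 1 := by
          have h2 : ∑ i ∈ G.verts.erase v, y' i ≤ ∑ i ∈ G.verts, y i := by
            calc ∑ i ∈ G.verts.erase v, y' i
                ≤ ∑ i ∈ G.verts.erase v, y i := by
                  refine Finset.sum_le_sum fun i _ => ?_
                  rw [hy']
                  dsimp only
                  split
                  · exact hy.1 i
                  · exact le_rfl
              _ ≤ ∑ i ∈ G.verts, y i :=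
                  Finset.sum_le_sum_of_subset_of_nonneg
                    (Finset.erase_subset v G.verts) (fun i _ _ => hy.1 i)
          rw [hyG.2.2] at h2
          exact h2
        have hdiv : (∑ i ∈ G.verts.erase v, y' i) / ((t-1:ℕ):ℝ)
            ≤ 1 / ((t-1:ℕ):ℝ) := by
          rcases eq_or_lt_of_le (Nat.cast_nonneg (t-1) : (0:ℝ) ≤ ((t-1:ℕ):ℝ))
            with h0 | h0
          · rw [← h0, div_zero, div_zero]
          · exact div_le_div_of_nonneg_right hsle h0.le
        have h3 : ((∑ i ∈ G.verts.erase v, y' i) / ((t-1:ℕ):ℝ))^r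
            ≤ (1 / ((t-1:ℕ):ℝ))^r :=
          pow_le_pow_left₀ (div_nonneg hsnn (Nat.cast_nonneg _)) hdiv r
        have hcast : ((t-1:ℕ):ℝ) = (t:ℝ) - 1 := by
          rw [Nat.cast_sub (by omega : 1 ≤ t), Nat.cast_one]
        calc RUnifHypergraph.polyValue H.edges y'
            ≤ ((t-1).choose r : ℝ)
              * ((∑ i ∈ G.verts.erase v, y' i) / ((t-1:ℕ):ℝ))^r := h1
          _ ≤ ((t-1).choose r : ℝ) * (1 / ((t-1:ℕ):ℝ))^r :=
              mul_le_mul_of_nonneg_left h3 (Nat.cast_nonneg _)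
          _ = B := by rw [hBdef, hcast, div_pow, one_pow, mul_one_div]
      -- combine
      rcases le_or_gt δ δ₀ with hcase | hcase
      · have hmδ : (m:ℝ) * δ ≤ ε/2 := by
          have h1 : (m:ℝ) * δ ≤ (m:ℝ) * δ₀ :=
            mul_le_mul_of_nonneg_left hcase (Nat.cast_nonneg m)
          have h2 : (m:ℝ) * δ₀ ≤ ε/2 := by
            rw [hδ₀, ← mul_div_assoc,
              div_le_div_iff₀ (by positivity) (by norm_num : (0:ℝ) < 2)]
            nlinarith [hεpos.le, (Nat.cast_nonneg m : (0:ℝ) ≤ (m:ℝ))]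
          linarith
        have hεeq : B = G.lagrangian - ε := by rw [hε]; ring
        linarith [hb2a, hb2b]
      · have h4 : δ₀^r ≤ δ^r := pow_le_pow_left₀ hδ₀pos.le hcase.le r
        have h5 : c ≤ δ₀^r := min_le_right _ _
        linarith [hb1]
    have hfin : H.lagrangian ≤ G.lagrangian - c := by
      refine lag_le H ?_ hbound
      have hle2 : B ≤ G.lagrangian := by linarith [hεpos]
      linarith
    linarith
  · -- missing a vertex
    have hss : H.verts ⊂ G.verts := Finset.ssubset_iff_subset_ne.mpr ⟨hVsub, hveq⟩
    have hcard : H.verts.card ≤ t - 1 := by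
      have := Finset.card_lt_card hss
      omega
    obtain ⟨S, hS1, hS2, hS3⟩ :=
      Finset.exists_subsuperset_card_eq hVsub hcard (by omega)
    have hcast : ((t-1:ℕ):ℝ) = (t:ℝ) - 1 := by
      rw [Nat.cast_sub (by omega : 1 ≤ t), Nat.cast_one]
    have hbound : ∀ y, H.LegalWeighting y → RUnifHypergraph.polyValue H.edges y ≤ B := by
      intro y hy
      have hsupp : ∀ i ∉ S, y i = 0 := fun i hi => hy.2.1 i (fun hmem => hi (hS1 hmem))
      have h1 := polyValue_supp_le H.edges S H.edge_card y hy.1 hsupp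
      have hsum : ∑ i ∈ S, y i = 1 := by
        rw [← Finset.sum_subset hS1 (fun i hiS hiH => hy.2.1 i hiH)]
        exact hy.2.2
      rw [hsum, hS3] at h1
      calc RUnifHypergraph.polyValue H.edges y
          ≤ ((t-1).choose r : ℝ) * ((1:ℝ) / ((t-1:ℕ):ℝ)) ^ r := h1
        _ = B := by rw [hBdef, hcast, div_pow, one_pow, mul_one_div]
    calc H.lagrangian ≤ B := lag_le H hBnn hbound
      _ < G.lagrangian := lt_of_lt_of_le hBlt hmt
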